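/- Let p be prime and μ a partition of pd with not all parts divisible by p, and let β be a complex number of the form β = e^{sπi/(pm_0)} with gcd(s, pm_0) = 1, m_0 | m, m_0 > 1, where gcd(d,m) = 1. Then there exists a part μ_k of μ with β^{μ_k} - β^{-μ_k} ≠ 0 and β^{pm μ_k} - β^{-pm μ_k} = 0; consequently ∏_{i=1}^{l(μ)} Q_{pm}(β^{μ_i}) = 0. -/

import Mathlib

/-- `Q_n(y) = y^{n-1} + y^{n-3} + ⋯ + y^{-(n-1)}` (n terms), which equals
`(y^n - y^{-n})/(y - y^{-1})` when `y² ≠ 1`, and `Q_n(±1) = n(±1)^{n-1}`. -/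
noncomputable def Qfun (n : ℕ) (y : ℂ) : ℂ :=
  ∑ j ∈ Finset.range n, y ^ ((n : ℤ) - 1 - 2 * (j : ℤ))

lemma Qfun_mul (n : ℕ) (y : ℂ) (hy : y ≠ 0) :
    (y - y⁻¹) * Qfun n y = y ^ (n : ℤ) - y ^ (-(n : ℤ)) := by
  have key : ∀ j ∈ Finset.range n,
      (y - y⁻¹) * y ^ ((n : ℤ) - 1 - 2 * (j : ℤ)) =
      y ^ ((n : ℤ) - 2 * (j : ℤ)) - y ^ ((n : ℤ) - 2 * ((j : ℤ) + 1)) := by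
    intro j _
    rw [sub_mul, ← zpow_neg_one y, ← zpow_add₀ hy, ← zpow_one_add₀ hy]
    congr 1 <;> congr 1 <;> ring
  unfold Qfun
  rw [Finset.mul_sum, Finset.sum_congr rfl key]
  have := Finset.sum_range_sub' (f := fun j : ℕ => y ^ ((n : ℤ) - 2 * (j : ℤ))) n
  simp only [Nat.cast_add, Nat.cast_one] at this ⊢
  rw [this]
  congr 1 <;> (congr 1; push_cast; ring)

theorem stmt17 (p d m m₀ s : ℕ) (hp : p.Prime) (hd : 1 ≤ d) (hm : 1 ≤ m)
    (hcop : Nat.Coprime d m) (hm₀ : m₀ ∣ m) (hm₀1 : 1 < m₀)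
    (hs : Nat.gcd s (p * m₀) = 1)
    (μ : Nat.Partition (p * d)) (hμ : ∃ c ∈ μ.parts, ¬ p ∣ c)
    (β : ℂ) (hβ : β = Complex.exp ((s : ℂ) * Real.pi * Complex.I / ((p : ℂ) * m₀))) :
    (∃ c ∈ μ.parts, β ^ (c : ℤ) - β ^ (-(c : ℤ)) ≠ 0 ∧
      β ^ ((p : ℤ) * m * c) - β ^ (-((p : ℤ) * m * c)) = 0) ∧
    (μ.parts.map (fun c => Qfun (p * m) (β ^ (c : ℕ)))).prod = 0 := by
  obtain ⟨c, hc, hpc⟩ := hμ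
  have hβ0 : β ≠ 0 := by rw [hβ]; exact Complex.exp_ne_zero _
  have hp0 : (p : ℂ) ≠ 0 := by exact_mod_cast hp.pos.ne'
  have hm₀0 : (m₀ : ℂ) ≠ 0 := by exact_mod_cast (by omega : m₀ ≠ 0)
  have hπ : (Real.pi : ℂ) ≠ 0 := by exact_mod_cast Real.pi_ne_zero
  -- β^(2pm₀) = 1
  have hroot : β ^ (2 * (p * m₀)) = 1 := by
    rw [hβ, ← Complex.exp_nat_mul, Complex.exp_eq_one_iff]
    exact ⟨s, by push_cast; field_simp⟩
  -- β^(2c) ≠ 1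
  have hkey : β ^ (2 * c) ≠ 1 := by
    intro h
    rw [hβ, ← Complex.exp_nat_mul, Complex.exp_eq_one_iff] at h
    obtain ⟨n, hn⟩ := h
    have hIm : Complex.I ≠ 0 := Complex.I_ne_zero
    field_simp at hn
    have h2pi : (2 : ℂ) * Real.pi * Complex.I ≠ 0 := by
      simp [hπ, hIm]
    have h2 : ((c * s : ℤ) : ℂ) = ((n * (p * m₀) : ℤ) : ℂ) := by
      push_cast
      exact mul_right_cancel₀ h2pi (by push_cast at hn; linear_combination ((Real.pi : ℂ) * Complex.I) * hn)
    have h3 : (c * s : ℤ) = n * (p * m₀) := by exact_mod_cast h2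
    have hdvd : (p * m₀ : ℕ) ∣ c * s := by
      have : ((p * m₀ : ℕ) : ℤ) ∣ ((c * s : ℕ) : ℤ) := ⟨n, by push_cast; linarith⟩
      exact_mod_cast this
    have hcop' : (Nat.Coprime (p * m₀) s) := (Nat.coprime_comm.mp hs)
    have : (p * m₀) ∣ c := (Nat.Coprime.dvd_of_dvd_mul_right hcop' hdvd)
    exact hpc (dvd_trans ⟨m₀, rfl⟩ this)
  -- part 1 of the conjunction witnesses
  have h1 : β ^ (c : ℤ) - β ^ (-(c : ℤ)) ≠ 0 := by
    intro h
    apply hkey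
    have he : β ^ (c : ℤ) = β ^ (-(c : ℤ)) := sub_eq_zero.mp h
    have : β ^ (2 * c : ℕ) = β ^ (c : ℤ) * β ^ ((c : ℤ)) := by
      rw [← zpow_natCast β (2 * c), ← zpow_add₀ hβ0]
      congr 1; push_cast; ring
    rw [this]
    nth_rewrite 2 [he]
    rw [← zpow_add₀ hβ0]
    simp
  have hdvd2 : (2 * (p * m₀)) ∣ (2 * (p * m * c)) := by
    obtain ⟨t, rfl⟩ := hm₀
    exact ⟨t * c, by ring⟩
  have hone : β ^ (2 * (p * m * c)) = 1 := by
    obtain ⟨k, hk⟩ := hdvd2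
    rw [hk, pow_mul, hroot, one_pow]
  have h2 : β ^ ((p : ℤ) * m * c) - β ^ (-((p : ℤ) * m * c)) = 0 := by
    rw [sub_eq_zero]
    have : β ^ ((p : ℤ) * m * c) = β ^ (2 * (p * m * c) : ℕ) * β ^ (-((p : ℤ) * m * c)) := by
      rw [← zpow_natCast β (2 * (p * m * c)), ← zpow_add₀ hβ0]
      congr 1; push_cast; ring
    rw [this, hone, one_mul]
  refine ⟨⟨c, hc, h1, h2⟩, ?_⟩
  -- Qfun (p*m) (β^c) = 0
  have hy0 : (β ^ (c : ℕ)) ≠ 0 := pow_ne_zero _ hβ0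
  have hQ : Qfun (p * m) (β ^ (c : ℕ)) = 0 := by
    have hmul := Qfun_mul (p * m) (β ^ (c : ℕ)) hy0
    have hleft : (β ^ (c : ℕ)) - (β ^ (c : ℕ))⁻¹ ≠ 0 := by
      rw [← zpow_natCast β c, ← zpow_neg]; exact h1
    have hright : (β ^ (c : ℕ)) ^ ((p * m : ℕ) : ℤ) - (β ^ (c : ℕ)) ^ (-((p * m : ℕ) : ℤ)) = 0 := by
      have e1 : (β ^ (c : ℕ)) ^ ((p * m : ℕ) : ℤ) = β ^ ((p : ℤ) * m * c) := by
        rw [← zpow_natCast β c, ← zpow_mul]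
        congr 1; push_cast; ring
      have e2 : (β ^ (c : ℕ)) ^ (-((p * m : ℕ) : ℤ)) = β ^ (-((p : ℤ) * m * c)) := by
        rw [← zpow_natCast β c, ← zpow_mul]
        congr 1; push_cast; ring
      rw [e1, e2]; exact h2
    rw [hright] at hmul
    rcases mul_eq_zero.mp hmul with h | h
    · exact absurd h hleft
    · exact h
  refine Multiset.prod_eq_zero ?_
  rw [Multiset.mem_map]
  exact ⟨c, hc, hQ⟩
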